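/- Let 1 < p < 2 and k ≥ 1. There exists a constant c = c(k, p) > 0 such that for all ξ, η ∈ ℝ^k one has (p/2) · |ξ − η| ≤ (1 + |ξ|² + |η|²)^{(2−p)/4} · |V(ξ) − V(η)| ≤ c(k, p) · |ξ − η|. -/

import Mathlib

open Real Set
open scoped RealInnerProductSpace

noncomputable def V {E : Type*} [NormedAddCommGroup E] [NormedSpace ℝ E] (p : ℝ) (ξ : E) : E :=
  ((1 + ‖ξ‖ ^ 2) ^ ((p - 2) / 4)) • ξ

lemma V_scalar_ineq (p r b X y A2 : ℝ) (hp : p / 2 = 1 + 2 * r) (hrneg : r ≤ 0) (hX0 : 0 ≤ X)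
    (hA2 : A2 ≤ y * b) : p / 2 * b * (X * y) ≤ 2 * r * A2 * X + X * y * b := by
  have hprod : 0 ≤ X * ((-2 * r) * (y * b - A2)) :=
    mul_nonneg hX0 (mul_nonneg (by linarith) (by linarith))
  have hkey : p / 2 * b * (X * y) = X * y * b + 2 * r * (X * y * b) := by rw [hp]; ring
  nlinarith [hprod, hkey]

section aux
variable {E : Type*} [NormedAddCommGroup E] [InnerProductSpace ℝ E]

lemma lower_aux (p : ℝ) (hp1 : 1 < p) (hp2 : p < 2) (ξ η : E) :
    p / 2 * ‖ξ - η‖ ≤ (1 + ‖ξ‖ ^ 2 + ‖η‖ ^ 2) ^ ((2 - p) / 4) * ‖V p ξ - V p η‖ := by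
  by_cases hu0 : ξ - η = 0
  · have h : ξ = η := sub_eq_zero.mp hu0
    simp [h]
  set r : ℝ := (p - 2) / 4 with hr
  have hrneg : r ≤ 0 := by rw [hr]; linarith
  set u : E := ξ - η with hu
  set a : ℝ := (inner ℝ η u : ℝ) with ha
  set b : ℝ := ‖u‖ ^ 2 with hb
  set cq : ℝ := ‖η‖ ^ 2 with hcq
  set W : ℝ := 1 + ‖ξ‖ ^ 2 + ‖η‖ ^ 2 with hW
  have hWpos : 0 < W := by positivity
  have hbpos : 0 < b := by
    rw [hb]; exact pow_pos (norm_pos_iff.mpr hu0) 2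
  set Q : ℝ → ℝ := fun t => 1 + (cq + 2 * a * t + b * t ^ 2) with hQ
  have hq : ∀ t : ℝ, ‖η + t • u‖ ^ 2 = cq + 2 * a * t + b * t ^ 2 := by
    intro t
    rw [norm_add_sq_real, real_inner_smul_right, norm_smul, Real.norm_eq_abs, mul_pow, sq_abs]
    ring
  have hQpos : ∀ t : ℝ, 0 < Q t := by
    intro t
    have h := hq t
    have : 0 ≤ ‖η + t • u‖ ^ 2 := sq_nonneg _
    simp only [hQ]
    nlinarith
  set g : ℝ → ℝ := fun t => Q t ^ r * (a + b * t) with hg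
  have hQ' : ∀ t : ℝ, HasDerivAt Q (2 * a + 2 * b * t) t := by
    intro t
    have h1 : HasDerivAt (fun t : ℝ => 2 * a * t) (2 * a) t := by
      simpa using (hasDerivAt_id t).const_mul (2 * a)
    have h2 : HasDerivAt (fun t : ℝ => b * t ^ 2) (b * (2 * t)) t := by
      simpa using (hasDerivAt_pow 2 t).const_mul b
    have := ((hasDerivAt_const t cq).add h1).add h2
    have := (hasDerivAt_const t (1:ℝ)).add this
    refine (this.congr_deriv (by ring)).congr_of_eventuallyEq (Filter.Eventually.of_forall fun x => ?_)
    simp only [hQ, Pi.add_apply, add_assoc]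
  have hlin : ∀ t : ℝ, HasDerivAt (fun t : ℝ => a + b * t) b t := by
    intro t
    have h := ((hasDerivAt_id t).const_mul b).const_add a
    rw [mul_one] at h
    exact h
  set g' : ℝ → ℝ := fun t =>
    (2 * a + 2 * b * t) * r * Q t ^ (r - 1) * (a + b * t) + Q t ^ r * b with hg'
  have hgderiv : ∀ t : ℝ, HasDerivAt g (g' t) t := by
    intro t
    exact ((hQ' t).rpow_const (Or.inl (hQpos t).ne')).mul (hlin t)
  set K : ℝ := p / 2 * b * W ^ r with hK
  have key : ∀ t ∈ Icc (0:ℝ) 1, K ≤ g' t := by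
    intro t ht
    have hQt : 0 < Q t := hQpos t
    have hQW : Q t ≤ W := by
      have h1 : η + t • u = (1 - t) • η + t • ξ := by
        rw [hu]; module
      have h2 : ‖η + t • u‖ ≤ (1 - t) * ‖η‖ + t * ‖ξ‖ := by
        rw [h1]
        refine (norm_add_le _ _).trans ?_
        rw [norm_smul, norm_smul, Real.norm_eq_abs, Real.norm_eq_abs,
          abs_of_nonneg ht.1, abs_of_nonneg (by linarith [ht.2] : (0:ℝ) ≤ 1 - t)]
      have h1t : (0:ℝ) ≤ 1 - t := by linarith [ht.2]
      have h2sq : ‖η + t • u‖ ^ 2 ≤ ((1 - t) * ‖η‖ + t * ‖ξ‖) ^ 2 :=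
        pow_le_pow_left₀ (norm_nonneg _) h2 2
      have h3 : ‖η + t • u‖ ^ 2 ≤ ‖ξ‖ ^ 2 + ‖η‖ ^ 2 := by
        nlinarith [mul_nonneg (mul_nonneg ht.1 h1t) (sq_nonneg (‖ξ‖ - ‖η‖)),
          mul_nonneg ht.1 (sq_nonneg ‖η‖), mul_nonneg h1t (sq_nonneg ‖ξ‖)]
      have h4 := hq t
      simp only [hQ, hW]
      nlinarith
    have hWQ : W ^ r ≤ Q t ^ r := Real.rpow_le_rpow_of_nonpos hQt hQW hrneg
    have hcs : (a + b * t) ^ 2 ≤ Q t * b := by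
      have h1 : a + b * t = (inner ℝ (η + t • u) u : ℝ) := by
        rw [inner_add_left, real_inner_smul_left, real_inner_self_eq_norm_sq, ← hb, ha]
        ring
      have h2 := real_inner_mul_inner_self_le (η + t • u) u
      rw [real_inner_self_eq_norm_sq, real_inner_self_eq_norm_sq, hq t, ← hb, ← h1] at h2
      have hQt1 : Q t = 1 + (cq + 2 * a * t + b * t ^ 2) := rfl
      nlinarith [hbpos.le]
    have hsplit : Q t ^ r = Q t ^ (r - 1) * Q t := by
      rw [← Real.rpow_add_one hQt.ne' (r - 1)]
      ring_nf
    have hX : 0 < Q t ^ (r - 1) := Real.rpow_pos_of_pos hQt _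
    have hbase : p / 2 * b * Q t ^ r ≤ g' t := by
      have heq : g' t = 2 * r * ((a + b * t) ^ 2) * (Q t ^ (r - 1)) +
          Q t ^ (r - 1) * Q t * b := by
        have h0 : g' t = (2 * a + 2 * b * t) * r * Q t ^ (r - 1) * (a + b * t) + Q t ^ r * b :=
          rfl
        rw [h0, hsplit]
        ring
      have hs2 := V_scalar_ineq p r b (Q t ^ (r - 1)) (Q t) ((a + b * t) ^ 2)
        (by rw [hr]; ring) hrneg hX.le hcs
      rw [heq, hsplit]
      linarith [hs2]
    calc K = p / 2 * b * W ^ r := rfl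
      _ ≤ p / 2 * b * Q t ^ r := by
          apply mul_le_mul_of_nonneg_left hWQ
          have : 0 < p := by linarith
          positivity
      _ ≤ g' t := hbase
  -- monotonicity
  have hcont : ContinuousOn g (Icc (0:ℝ) 1) := fun t _ =>
    (hgderiv t).differentiableAt.continuousAt.continuousWithinAt
  have hdiff : DifferentiableOn ℝ g (interior (Icc (0:ℝ) 1)) := fun t _ =>
    (hgderiv t).differentiableAt.differentiableWithinAt
  have hbound : ∀ t ∈ interior (Icc (0:ℝ) 1), K ≤ deriv g t := by
    intro t ht
    rw [(hgderiv t).deriv]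
    exact key t (interior_subset ht)
  have hmvt := (convex_Icc (0:ℝ) 1).mul_sub_le_image_sub_of_le_deriv hcont hdiff hbound
    0 (by constructor <;> norm_num) 1 (by constructor <;> norm_num) zero_le_one
  -- identify g 1 and g 0
  have hxi : η + (1:ℝ) • u = ξ := by rw [hu]; module
  have hg1 : g 1 = (1 + ‖ξ‖ ^ 2) ^ r * (inner ℝ ξ u : ℝ) := by
    have hq1 : Q 1 = 1 + ‖ξ‖ ^ 2 := by
      simp only [hQ]
      rw [← hq 1, hxi]
    have hi1 : a + b * 1 = (inner ℝ ξ u : ℝ) := by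
      rw [← hxi, inner_add_left, real_inner_smul_left, real_inner_self_eq_norm_sq, ← hb, ha]
      ring
    simp only [hg]
    rw [hq1, hi1]
  have hg0 : g 0 = (1 + ‖η‖ ^ 2) ^ r * (inner ℝ η u : ℝ) := by
    have hq0 : Q 0 = 1 + ‖η‖ ^ 2 := by
      simp only [hQ]
      rw [hcq]; ring
    simp only [hg]
    rw [hq0]
    norm_num
    exact Or.inl ha
  have hVg : g 1 - g 0 = (inner ℝ (V p ξ - V p η) u : ℝ) := by
    rw [inner_sub_left, V, V, real_inner_smul_left, real_inner_smul_left, hg1, hg0, ← hr]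
  have hCS : (inner ℝ (V p ξ - V p η) u : ℝ) ≤ ‖V p ξ - V p η‖ * ‖u‖ := real_inner_le_norm _ _
  have hfinal : K ≤ ‖V p ξ - V p η‖ * ‖u‖ := by
    have : K * (1 - 0) ≤ g 1 - g 0 := hmvt
    rw [hVg] at this
    simpa using this.trans hCS
  have hupos : 0 < ‖u‖ := by
    rw [hu]; exact norm_sub_pos_iff.mpr (sub_ne_zero.mp hu0 : ξ ≠ η)
  have hmr : 0 < W ^ r := Real.rpow_pos_of_pos hWpos r
  have hexp : (2 - p) / 4 = -r := by rw [hr]; ring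
  rw [hexp, Real.rpow_neg hWpos.le]
  have goal' : p / 2 * ‖u‖ * W ^ r ≤ ‖V p ξ - V p η‖ := by
    have h2 : (p / 2 * ‖u‖ * W ^ r) * ‖u‖ ≤ ‖V p ξ - V p η‖ * ‖u‖ := by
      calc (p / 2 * ‖u‖ * W ^ r) * ‖u‖ = p / 2 * b * W ^ r := by rw [hb]; ring
        _ ≤ ‖V p ξ - V p η‖ * ‖u‖ := hfinal
    exact le_of_mul_le_mul_right h2 hupos
  calc p / 2 * ‖u‖ = (W ^ r)⁻¹ * (p / 2 * ‖u‖ * W ^ r) := by field_simp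
    _ ≤ (W ^ r)⁻¹ * ‖V p ξ - V p η‖ :=
        mul_le_mul_of_nonneg_left goal' (inv_nonneg.mpr hmr.le)


set_option maxHeartbeats 1000000 in
-- key scalar estimate: ((A/B)^s - 1) * n ≤ 4 * d
lemma key_scalar (s m n d : ℝ) (hs0 : 0 < s) (hs1 : s ≤ 1/4) (hn0 : 0 ≤ n) (hnm : n ≤ m)
    (hd0 : 0 ≤ d) (hmd : m - n ≤ d) :
    (((1 + m ^ 2) / (1 + n ^ 2)) ^ s - 1) * n ≤ 4 * d := by
  obtain ⟨A, hA⟩ : ∃ A : ℝ, A = 1 + m ^ 2 := ⟨_, rfl⟩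
  obtain ⟨B, hB⟩ : ∃ B : ℝ, B = 1 + n ^ 2 := ⟨_, rfl⟩
  rw [← hA, ← hB]
  have hm0 : 0 ≤ m := le_trans hn0 hnm
  have hB1 : (1:ℝ) ≤ B := by rw [hB]; nlinarith
  have hB0 : (0:ℝ) < B := by linarith
  have hBA : B ≤ A := by rw [hA, hB]; nlinarith
  have hA0 : (0:ℝ) < A := by rw [hA]; positivity
  have hx1 : (1:ℝ) ≤ A / B := (one_le_div hB0).mpr hBA
  -- Bernoulli-type bound
  have hBer : (A / B) ^ s ≤ s * (A / B) + (1 - s) := by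
    have := Real.geom_mean_le_arith_mean2_weighted hs0.le (by linarith : (0:ℝ) ≤ 1 - s)
      (by positivity : (0:ℝ) ≤ A / B) zero_le_one (by ring)
    simpa [Real.one_rpow] using this
  have hABd : A - B ≤ (m + n) * d := by
    have : A - B = (m + n) * (m - n) := by rw [hA, hB]; ring
    rw [this]
    exact mul_le_mul_of_nonneg_left hmd (by linarith)
  rcases le_or_gt m (2 * n) with hc | hc
  · -- m ≤ 2n : Bernoulli suffices
    have h1 : (A / B) ^ s - 1 ≤ s * ((A - B) / B) := by
      have : s * (A / B) + (1 - s) - 1 = s * ((A - B) / B) := by field_simp; ring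
      linarith [hBer, this.symm.le]
    have h2 : s * ((A - B) / B) * n ≤ 4 * d := by
      have e : s * ((A - B) / B) * n = s * (A - B) * n / B := by ring
      rw [e, div_le_iff₀ hB0]
      have hAB3 : A - B ≤ 3 * n * d := by nlinarith
      have t1 : s * (A - B) * n ≤ s * (3 * n * d) * n :=
        mul_le_mul_of_nonneg_right (mul_le_mul_of_nonneg_left hAB3 hs0.le) hn0
      have t2 : s * (3 * n * d) * n ≤ (1/4) * (3 * n * d) * n := by
        have h0 : 0 ≤ (3 * n * d) * n := by positivity
        nlinarith [mul_le_mul_of_nonneg_right hs1 h0]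
      have t3 : (1/4) * (3 * n * d) * n ≤ 4 * d * B := by
        rw [hB]; nlinarith [mul_nonneg hd0 (sq_nonneg n)]
      linarith
    calc ((A / B) ^ s - 1) * n ≤ s * ((A - B) / B) * n := by
          apply mul_le_mul_of_nonneg_right h1 hn0
      _ ≤ 4 * d := h2
  · rcases le_or_gt m 1 with hm1 | hm1
    · -- m ≤ 1
      have h1 : (A / B) ^ s - 1 ≤ s * ((A - B) / B) := by
        have : s * (A / B) + (1 - s) - 1 = s * ((A - B) / B) := by field_simp; ring
        linarith [hBer, this.symm.le]
      have h2 : s * ((A - B) / B) * n ≤ 4 * d := by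
        have e : s * ((A - B) / B) * n = s * (A - B) * n / B := by ring
        rw [e, div_le_iff₀ hB0]
        have hABn : A - B ≤ 2 * d := by nlinarith
        have t1 : s * (A - B) * n ≤ s * (2 * d) * n :=
          mul_le_mul_of_nonneg_right (mul_le_mul_of_nonneg_left hABn hs0.le) hn0
        have t2 : s * (2 * d) * n ≤ (1/4) * (2 * d) * 1 := by
          have hn1 : n ≤ 1 := hnm.trans hm1
          nlinarith [mul_nonneg hs0.le hd0, hd0]
        have t3 : (1/4) * (2 * d) * 1 ≤ 4 * d * B := by
          nlinarith [mul_nonneg hd0 (sub_nonneg.mpr hB1)]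
        linarith
      calc ((A / B) ^ s - 1) * n ≤ s * ((A - B) / B) * n := by
            apply mul_le_mul_of_nonneg_right h1 hn0
        _ ≤ 4 * d := h2
    · -- 1 < m, 2n < m : use power bound
      have hd2 : m ≤ 2 * d := by linarith
      have hAs : A ^ s ≤ 2 * m ^ (2 * s) := by
        have hA2m : A ≤ 2 * m ^ 2 := by rw [hA]; nlinarith
        have h1 : A ^ s ≤ (2 * m ^ 2) ^ s := Real.rpow_le_rpow hA0.le hA2m hs0.le
        have h2 : (2 * m ^ 2) ^ s = 2 ^ s * (m ^ 2) ^ s := Real.mul_rpow (by norm_num) (sq_nonneg m)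
        have h3 : (2:ℝ) ^ s ≤ 2 := by
          calc (2:ℝ) ^ s ≤ 2 ^ (1:ℝ) := Real.rpow_le_rpow_of_exponent_le one_le_two (by linarith)
            _ = 2 := Real.rpow_one 2
        have h4 : (m ^ 2) ^ s = m ^ (2 * s) := by
          rw [← Real.rpow_natCast m 2, ← Real.rpow_mul hm0]
          norm_num
        have h5 : (0:ℝ) ≤ m ^ (2 * s) := Real.rpow_nonneg hm0 _
        calc A ^ s ≤ 2 ^ s * (m ^ 2) ^ s := h1.trans_eq h2
          _ = 2 ^ s * m ^ (2 * s) := by rw [h4]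
          _ ≤ 2 * m ^ (2 * s) := mul_le_mul_of_nonneg_right h3 h5
      have hnB : n / B ^ s ≤ m ^ (1 - 2 * s) := by
        have hm1' : (1:ℝ) ≤ m := hm1.le
        have hBs : (0:ℝ) < B ^ s := Real.rpow_pos_of_pos hB0 _
        rcases le_or_gt n 1 with hn1 | hn1
        · have h1 : (1:ℝ) ≤ B ^ s := Real.one_le_rpow hB1 hs0.le
          have h2 : n / B ^ s ≤ n := by
            rw [div_le_iff₀ hBs]
            nlinarith
          have h3 : (1:ℝ) ≤ m ^ (1 - 2 * s) := Real.one_le_rpow hm1' (by linarith)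
          linarith
        · have hn0' : (0:ℝ) < n := by linarith
          have h1 : n ^ (2 * s) ≤ B ^ s := by
            have : (n ^ 2 : ℝ) ≤ B := by rw [hB]; linarith
            calc n ^ (2 * s) = (n ^ 2) ^ s := by
                  rw [← Real.rpow_natCast n 2, ← Real.rpow_mul hn0]; norm_num
              _ ≤ B ^ s := Real.rpow_le_rpow (sq_nonneg n) this hs0.le
          have h2 : n / B ^ s ≤ n / n ^ (2 * s) := by
            apply div_le_div_of_nonneg_left hn0 ?_ h1
            exact Real.rpow_pos_of_pos hn0' _
          have h3 : n / n ^ (2 * s) = n ^ (1 - 2 * s) := by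
            rw [Real.rpow_sub hn0', Real.rpow_one]
          have h4 : n ^ (1 - 2 * s) ≤ m ^ (1 - 2 * s) :=
            Real.rpow_le_rpow hn0 hnm (by linarith)
          calc n / B ^ s ≤ n / n ^ (2 * s) := h2
            _ = n ^ (1 - 2 * s) := h3
            _ ≤ m ^ (1 - 2 * s) := h4
      have hfin : (A / B) ^ s * n ≤ 4 * d := by
        have hdiv : (A / B) ^ s = A ^ s / B ^ s := Real.div_rpow hA0.le hB0.le s
        have hBs : (0:ℝ) < B ^ s := Real.rpow_pos_of_pos hB0 _
        have h1 : (A / B) ^ s * n = A ^ s * (n / B ^ s) := by rw [hdiv]; ring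
        have h2 : A ^ s * (n / B ^ s) ≤ (2 * m ^ (2 * s)) * m ^ (1 - 2 * s) := by
          apply mul_le_mul hAs hnB (by positivity) (by positivity)
        have h3 : (2 * m ^ (2 * s)) * m ^ (1 - 2 * s) = 2 * m := by
          have he : 2 * s + (1 - 2 * s) = 1 := by ring
          rw [mul_assoc, ← Real.rpow_add (by linarith : (0:ℝ) < m), he, Real.rpow_one]
        calc (A / B) ^ s * n = A ^ s * (n / B ^ s) := h1
          _ ≤ 2 * m := h2.trans_eq h3
          _ ≤ 4 * d := by linarith
      have hpow : (0:ℝ) ≤ (A / B) ^ s := Real.rpow_nonneg (by positivity) _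
      nlinarith [hfin, hn0]

set_option maxHeartbeats 1000000 in
lemma upper_aux (p : ℝ) (hp1 : 1 < p) (hp2 : p < 2) (ξ η : E) (hle : ‖η‖ ≤ ‖ξ‖) :
    (1 + ‖ξ‖ ^ 2 + ‖η‖ ^ 2) ^ ((2 - p) / 4) * ‖V p ξ - V p η‖ ≤ 10 * ‖ξ - η‖ := by
  obtain ⟨s, hs⟩ : ∃ s : ℝ, s = (2 - p) / 4 := ⟨_, rfl⟩
  have hs0 : 0 < s := by rw [hs]; linarith
  have hs1 : s ≤ 1 / 4 := by rw [hs]; linarith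
  have hrs : (p - 2) / 4 = -s := by rw [hs]; ring
  have hA0 : (0:ℝ) < 1 + ‖ξ‖ ^ 2 := by positivity
  have hB0 : (0:ℝ) < 1 + ‖η‖ ^ 2 := by positivity
  have hW0 : (0:ℝ) < 1 + ‖ξ‖ ^ 2 + ‖η‖ ^ 2 := by positivity
  have hBA : 1 + ‖η‖ ^ 2 ≤ 1 + ‖ξ‖ ^ 2 := by
    have := pow_le_pow_left₀ (norm_nonneg η) hle 2
    linarith
  have hdecomp : V p ξ - V p η = ((1 + ‖ξ‖ ^ 2) ^ (-s)) • (ξ - η) +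
      ((1 + ‖ξ‖ ^ 2) ^ (-s) - (1 + ‖η‖ ^ 2) ^ (-s)) • η := by
    rw [V, V, hrs]
    module
  have hAs : (0:ℝ) < (1 + ‖ξ‖ ^ 2) ^ (-s) := Real.rpow_pos_of_pos hA0 _
  have hBs : (0:ℝ) < (1 + ‖η‖ ^ 2) ^ (-s) := Real.rpow_pos_of_pos hB0 _
  have hALeB : (1 + ‖ξ‖ ^ 2) ^ (-s) ≤ (1 + ‖η‖ ^ 2) ^ (-s) := by
    rw [Real.rpow_neg hA0.le, Real.rpow_neg hB0.le]
    apply inv_anti₀ (Real.rpow_pos_of_pos hB0 _)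
    exact Real.rpow_le_rpow hB0.le hBA hs0.le
  have hnorm : ‖V p ξ - V p η‖ ≤ (1 + ‖ξ‖ ^ 2) ^ (-s) * ‖ξ - η‖ +
      ((1 + ‖η‖ ^ 2) ^ (-s) - (1 + ‖ξ‖ ^ 2) ^ (-s)) * ‖η‖ := by
    rw [hdecomp]
    refine (norm_add_le _ _).trans ?_
    rw [norm_smul, norm_smul, Real.norm_eq_abs, Real.norm_eq_abs,
      abs_of_nonneg hAs.le, abs_of_nonpos (by linarith), neg_sub]
  have hkey := key_scalar s ‖ξ‖ ‖η‖ ‖ξ - η‖ hs0 hs1 (norm_nonneg η) hle (norm_nonneg _)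
    (norm_sub_norm_le ξ η)
  have hid : (1 + ‖η‖ ^ 2) ^ (-s) - (1 + ‖ξ‖ ^ 2) ^ (-s) =
      (1 + ‖ξ‖ ^ 2) ^ (-s) * (((1 + ‖ξ‖ ^ 2) / (1 + ‖η‖ ^ 2)) ^ s - 1) := by
    rw [Real.rpow_neg hA0.le, Real.rpow_neg hB0.le, Real.div_rpow hA0.le hB0.le]
    have ha : (1 + ‖ξ‖ ^ 2) ^ s ≠ 0 := (Real.rpow_pos_of_pos hA0 s).ne'
    have hb : (1 + ‖η‖ ^ 2) ^ s ≠ 0 := (Real.rpow_pos_of_pos hB0 s).ne'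
    field_simp
  have hsecond : ((1 + ‖η‖ ^ 2) ^ (-s) - (1 + ‖ξ‖ ^ 2) ^ (-s)) * ‖η‖ ≤
      (1 + ‖ξ‖ ^ 2) ^ (-s) * (4 * ‖ξ - η‖) := by
    rw [hid, mul_assoc]
    exact mul_le_mul_of_nonneg_left hkey hAs.le
  have htot : ‖V p ξ - V p η‖ ≤ 5 * ((1 + ‖ξ‖ ^ 2) ^ (-s) * ‖ξ - η‖) := by
    have := hnorm.trans (by linarith : (1 + ‖ξ‖ ^ 2) ^ (-s) * ‖ξ - η‖ +
      ((1 + ‖η‖ ^ 2) ^ (-s) - (1 + ‖ξ‖ ^ 2) ^ (-s)) * ‖η‖ ≤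
      5 * ((1 + ‖ξ‖ ^ 2) ^ (-s) * ‖ξ - η‖))
    exact this
  have hWA : (1 + ‖ξ‖ ^ 2 + ‖η‖ ^ 2) ^ s ≤ 2 * (1 + ‖ξ‖ ^ 2) ^ s := by
    have h1 : 1 + ‖ξ‖ ^ 2 + ‖η‖ ^ 2 ≤ 2 * (1 + ‖ξ‖ ^ 2) := by nlinarith
    have h2 : (1 + ‖ξ‖ ^ 2 + ‖η‖ ^ 2) ^ s ≤ (2 * (1 + ‖ξ‖ ^ 2)) ^ s :=
      Real.rpow_le_rpow hW0.le h1 hs0.le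
    have h3 : (2 * (1 + ‖ξ‖ ^ 2)) ^ s = 2 ^ s * (1 + ‖ξ‖ ^ 2) ^ s :=
      Real.mul_rpow (by norm_num) hA0.le
    have h4 : (2:ℝ) ^ s ≤ 2 := by
      calc (2:ℝ) ^ s ≤ 2 ^ (1:ℝ) := Real.rpow_le_rpow_of_exponent_le one_le_two (by linarith)
        _ = 2 := Real.rpow_one 2
    have h5 : (0:ℝ) ≤ (1 + ‖ξ‖ ^ 2) ^ s := (Real.rpow_pos_of_pos hA0 s).le
    calc (1 + ‖ξ‖ ^ 2 + ‖η‖ ^ 2) ^ s ≤ 2 ^ s * (1 + ‖ξ‖ ^ 2) ^ s := h2.trans_eq h3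
      _ ≤ 2 * (1 + ‖ξ‖ ^ 2) ^ s := mul_le_mul_of_nonneg_right h4 h5
  have hWs : (0:ℝ) < (1 + ‖ξ‖ ^ 2 + ‖η‖ ^ 2) ^ s := Real.rpow_pos_of_pos hW0 _
  have hcancel : (1 + ‖ξ‖ ^ 2) ^ s * (1 + ‖ξ‖ ^ 2) ^ (-s) = 1 := by
    rw [← Real.rpow_add hA0]
    norm_num
  calc (1 + ‖ξ‖ ^ 2 + ‖η‖ ^ 2) ^ ((2 - p) / 4) * ‖V p ξ - V p η‖
      = (1 + ‖ξ‖ ^ 2 + ‖η‖ ^ 2) ^ s * ‖V p ξ - V p η‖ := by rw [hs]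
    _ ≤ (1 + ‖ξ‖ ^ 2 + ‖η‖ ^ 2) ^ s * (5 * ((1 + ‖ξ‖ ^ 2) ^ (-s) * ‖ξ - η‖)) :=
        mul_le_mul_of_nonneg_left htot hWs.le
    _ ≤ 2 * (1 + ‖ξ‖ ^ 2) ^ s * (5 * ((1 + ‖ξ‖ ^ 2) ^ (-s) * ‖ξ - η‖)) := by
        apply mul_le_mul_of_nonneg_right hWA
        positivity
    _ = 10 * ((1 + ‖ξ‖ ^ 2) ^ s * (1 + ‖ξ‖ ^ 2) ^ (-s)) * ‖ξ - η‖ := by ring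
    _ = 10 * ‖ξ - η‖ := by rw [hcancel]; ring


end aux

theorem stmt_3 (p : ℝ) (hp1 : 1 < p) (hp2 : p < 2) (k : ℕ) (hk : 1 ≤ k) :
    ∃ c : ℝ, 0 < c ∧ ∀ ξ η : EuclideanSpace ℝ (Fin k),
      p / 2 * ‖ξ - η‖ ≤ (1 + ‖ξ‖ ^ 2 + ‖η‖ ^ 2) ^ ((2 - p) / 4) * ‖V p ξ - V p η‖ ∧
        (1 + ‖ξ‖ ^ 2 + ‖η‖ ^ 2) ^ ((2 - p) / 4) * ‖V p ξ - V p η‖ ≤ c * ‖ξ - η‖ := by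
  refine ⟨10, by norm_num, fun ξ η => ⟨lower_aux p hp1 hp2 ξ η, ?_⟩⟩
  rcases le_total ‖η‖ ‖ξ‖ with h | h
  · exact upper_aux p hp1 hp2 ξ η h
  · have h2 := upper_aux p hp1 hp2 η ξ h
    calc (1 + ‖ξ‖ ^ 2 + ‖η‖ ^ 2) ^ ((2 - p) / 4) * ‖V p ξ - V p η‖
        = (1 + ‖η‖ ^ 2 + ‖ξ‖ ^ 2) ^ ((2 - p) / 4) * ‖V p η - V p ξ‖ := by
          rw [norm_sub_rev, show (1 + ‖ξ‖ ^ 2 + ‖η‖ ^ 2) = (1 + ‖η‖ ^ 2 + ‖ξ‖ ^ 2) from by ring]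
      _ ≤ 10 * ‖η - ξ‖ := h2
      _ = 10 * ‖ξ - η‖ := by rw [norm_sub_rev]
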